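/- (Cauchy–Schwarz step leading to Theorem 2.5, case μ = 0.) Assume in addition that ψ̂(t) > 0 for almost every t ∈ ℝⁿ. Let f : ℝⁿ → ℝ be integrable with an integrable Fourier transform f̂ satisfying f(x) = (2π)^{−n} ∫_{ℝⁿ} e^{i⟨x,t⟩} f̂(t) dt for all x, and suppose c_f² := (2π)^{−n} ∫_{ℝⁿ} |f̂(t)|² (ψ̂(t))^{−1} dt < ∞. Then for any x, x_1, …, x_M ∈ ℝⁿ and any u_1, …, u_M ∈ ℝ, |Σ_{j=1}^M u_j f(x_j) − f(x)| ≤ κ · c_f, where κ² := (2π)^{−n} ∫_{ℝⁿ} |Σ_{j=1}^M u_j e^{i⟨x_j,t⟩} − e^{i⟨x,t⟩}|² ψ̂(t) dt. -/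

import Mathlib

open MeasureTheory

/-- e^{i⟨y,t⟩}, with the Euclidean inner product on ℝⁿ. -/
noncomputable def expI {n : ℕ} (y t : EuclideanSpace ℝ (Fin n)) : ℂ :=
  Complex.exp (Complex.I * ((inner ℝ y t : ℝ) : ℂ))

/-- The constant (2π)^{−n}. -/
noncomputable def c2pin (n : ℕ) : ℝ := ((2 * Real.pi) ^ n)⁻¹

/-- Cauchy–Schwarz step leading to Theorem 2.5, case μ = 0:
|Σ_j u_j f(x_j) − f(x)| ≤ κ · c_f, where
κ² = (2π)^{−n} ∫ |Σ_j u_j e^{i⟨x_j,t⟩} − e^{i⟨x,t⟩}|² ψ̂(t) dt and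
c_f² = (2π)^{−n} ∫ |f̂(t)|² (ψ̂(t))⁻¹ dt < ∞. -/
lemma expI_cont {n : ℕ} (y : EuclideanSpace ℝ (Fin n)) : Continuous (expI y) := by
  unfold expI
  exact Complex.continuous_exp.comp
    (continuous_const.mul (Complex.continuous_ofReal.comp (continuous_const.inner continuous_id)))

lemma expI_norm {n : ℕ} (y t : EuclideanSpace ℝ (Fin n)) : ‖expI y t‖ = 1 := by
  unfold expI
  rw [Complex.norm_exp]
  simp [Complex.mul_re]

theorem cauchy_schwarz_error_bound
    (n M : ℕ)
    (ψ : EuclideanSpace ℝ (Fin n) → ℝ) (hψcont : Continuous ψ)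
    (ψhat : EuclideanSpace ℝ (Fin n) → ℝ)
    (hψhat_nonneg : ∀ t, 0 ≤ ψhat t)
    (hψhat_int : Integrable ψhat)
    (hψhat_pos : ∀ᵐ t : EuclideanSpace ℝ (Fin n), 0 < ψhat t)
    (hψinv : ∀ y : EuclideanSpace ℝ (Fin n),
      (ψ y : ℂ) = (c2pin n : ℂ) * ∫ t, expI y t * (ψhat t : ℂ))
    (f : EuclideanSpace ℝ (Fin n) → ℝ) (hf_int : Integrable f)
    (fhat : EuclideanSpace ℝ (Fin n) → ℂ) (hfhat_int : Integrable fhat)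
    (hfinv : ∀ y : EuclideanSpace ℝ (Fin n),
      (f y : ℂ) = (c2pin n : ℂ) * ∫ t, expI y t * fhat t)
    (hcf_fin : Integrable (fun t : EuclideanSpace ℝ (Fin n) => ‖fhat t‖ ^ 2 * (ψhat t)⁻¹))
    (x : EuclideanSpace ℝ (Fin n)) (xs : Fin M → EuclideanSpace ℝ (Fin n))
    (u : Fin M → ℝ) :
    |(∑ j, u j * f (xs j)) - f x| ≤
      Real.sqrt (c2pin n * ∫ t, ‖(∑ j, (u j : ℂ) * expI (xs j) t) - expI x t‖ ^ 2 * ψhat t) *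
        Real.sqrt (c2pin n * ∫ t, ‖fhat t‖ ^ 2 * (ψhat t)⁻¹) := by
  classical
  set g : EuclideanSpace ℝ (Fin n) → ℂ :=
    fun t => (∑ j, (u j : ℂ) * expI (xs j) t) - expI x t with hg_def
  have hc2 : (0 : ℝ) ≤ c2pin n := by
    unfold c2pin; positivity
  have hg_cont : Continuous g := by
    exact (continuous_finset_sum _ fun j _ => continuous_const.mul (expI_cont (xs j))).sub (expI_cont x)
  set B : ℝ := (∑ j, |u j|) + 1 with hB
  have hg_bdd : ∀ t, ‖g t‖ ≤ B := by
    intro t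
    refine (norm_sub_le _ _).trans ?_
    rw [hB]
    gcongr
    · calc ‖∑ j, (u j : ℂ) * expI (xs j) t‖ ≤ ∑ j, ‖(u j : ℂ) * expI (xs j) t‖ :=
        norm_sum_le _ _
      _ = ∑ j, |u j| := by simp_rw [norm_mul, expI_norm, mul_one, Complex.norm_real, Real.norm_eq_abs]
    · exact le_of_eq (expI_norm x t)
  have hint : ∀ y : EuclideanSpace ℝ (Fin n), Integrable fun t => expI y t * fhat t := fun y =>
    hfhat_int.bdd_mul (expI_cont y).aestronglyMeasurable (c := 1) (Filter.Eventually.of_forall fun t => le_of_eq (expI_norm y t))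
  have hgf_int : Integrable fun t => g t * fhat t :=
    hfhat_int.bdd_mul hg_cont.aestronglyMeasurable (c := B) (Filter.Eventually.of_forall hg_bdd)
  have hsum_int : Integrable fun t => (∑ j, (u j : ℂ) * expI (xs j) t) * fhat t := by
    simp_rw [Finset.sum_mul, mul_assoc]
    exact integrable_finset_sum _ fun j _ => (hint (xs j)).const_mul _
  have key : ∫ t, g t * fhat t =
      (∑ j, (u j : ℂ) * ∫ t, expI (xs j) t * fhat t) - ∫ t, expI x t * fhat t := by
    simp_rw [hg_def, sub_mul]
    rw [integral_sub hsum_int (hint x)]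
    congr 1
    simp_rw [Finset.sum_mul, mul_assoc]
    rw [integral_finset_sum _ fun j _ => (hint (xs j)).const_mul _]
    simp [integral_const_mul]
  have hA : (((∑ j, u j * f (xs j)) - f x : ℝ) : ℂ) = (c2pin n : ℂ) * ∫ t, g t * fhat t := by
    push_cast
    rw [hfinv x, key, mul_sub, Finset.mul_sum]
    congr 1
    refine Finset.sum_congr rfl fun j _ => ?_
    rw [hfinv (xs j)]
    ring
  have habs : |(∑ j, u j * f (xs j)) - f x| ≤ c2pin n * ∫ t, ‖g t‖ * ‖fhat t‖ := by
    have h1 : |(∑ j, u j * f (xs j)) - f x| = ‖(((∑ j, u j * f (xs j)) - f x : ℝ) : ℂ)‖ := by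
      rw [Complex.norm_real, Real.norm_eq_abs]
    rw [h1, hA, norm_mul, Complex.norm_real, Real.norm_eq_abs, abs_of_nonneg hc2]
    gcongr
    calc ‖∫ t, g t * fhat t‖ ≤ ∫ t, ‖g t * fhat t‖ := norm_integral_le_integral_norm _
      _ = ∫ t, ‖g t‖ * ‖fhat t‖ := by simp_rw [norm_mul]
  -- Cauchy–Schwarz
  set a : EuclideanSpace ℝ (Fin n) → ℝ := fun t => ‖g t‖ * Real.sqrt (ψhat t) with ha_def
  set b : EuclideanSpace ℝ (Fin n) → ℝ := fun t => ‖fhat t‖ * (Real.sqrt (ψhat t))⁻¹ with hb_def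
  have hψ_meas := hψhat_int.aestronglyMeasurable
  have ha_meas : AEStronglyMeasurable a volume :=
    hg_cont.norm.aestronglyMeasurable.mul
      (Real.continuous_sqrt.comp_aestronglyMeasurable hψ_meas)
  have hb_meas : AEStronglyMeasurable b volume :=
    hfhat_int.norm.aestronglyMeasurable.mul
      (Real.continuous_sqrt.comp_aestronglyMeasurable hψ_meas).aemeasurable.inv.aestronglyMeasurable
  have ha2eq : (fun t => a t ^ 2) = fun t => ‖g t‖ ^ 2 * ψhat t := by
    funext t; rw [ha_def, mul_pow, Real.sq_sqrt (hψhat_nonneg t)]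
  have hb2eq : (fun t => b t ^ 2) = fun t => ‖fhat t‖ ^ 2 * (ψhat t)⁻¹ := by
    funext t
    rw [hb_def, mul_pow, ← Real.sqrt_inv, Real.sq_sqrt (inv_nonneg.2 (hψhat_nonneg t))]
  have ha2 : Integrable (fun t => a t ^ 2) := by
    rw [ha2eq]
    refine hψhat_int.bdd_mul (hg_cont.norm.pow 2).aestronglyMeasurable (c := B ^ 2) (Filter.Eventually.of_forall fun t => ?_)
    rw [Real.norm_eq_abs, abs_of_nonneg (by positivity)]
    exact pow_le_pow_left₀ (norm_nonneg _) (hg_bdd t) 2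
  have hb2 : Integrable (fun t => b t ^ 2) := by rw [hb2eq]; exact hcf_fin
  have hMa : MemLp a (ENNReal.ofReal 2) volume := by
    rw [show ENNReal.ofReal 2 = 2 by norm_num [ENNReal.ofReal_ofNat]]
    exact (memLp_two_iff_integrable_sq ha_meas).2 ha2
  have hMb : MemLp b (ENNReal.ofReal 2) volume := by
    rw [show ENNReal.ofReal 2 = 2 by norm_num [ENNReal.ofReal_ofNat]]
    exact (memLp_two_iff_integrable_sq hb_meas).2 hb2
  have hCS : ∫ t, a t * b t ≤
      (∫ t, a t ^ (2 : ℝ)) ^ (1 / 2 : ℝ) * (∫ t, b t ^ (2 : ℝ)) ^ (1 / 2 : ℝ) :=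
    integral_mul_le_Lp_mul_Lq_of_nonneg Real.HolderConjugate.two_two
      (Filter.Eventually.of_forall fun t => by positivity)
      (Filter.Eventually.of_forall fun t => by positivity) hMa hMb
  have hrpow : ∀ h : EuclideanSpace ℝ (Fin n) → ℝ,
      (∫ t, h t ^ (2 : ℝ)) ^ (1 / 2 : ℝ) = Real.sqrt (∫ t, h t ^ 2) := by
    intro h
    rw [Real.sqrt_eq_rpow]
    congr 1
    refine integral_congr_ae (Filter.Eventually.of_forall fun t => ?_)
    show h t ^ (2 : ℝ) = h t ^ (2 : ℕ)
    rw [show (2 : ℝ) = ((2 : ℕ) : ℝ) by norm_num, Real.rpow_natCast]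
  have hab : ∫ t, ‖g t‖ * ‖fhat t‖ ≤
      Real.sqrt (∫ t, ‖g t‖ ^ 2 * ψhat t) * Real.sqrt (∫ t, ‖fhat t‖ ^ 2 * (ψhat t)⁻¹) := by
    have heq : ∫ t, a t * b t = ∫ t, ‖g t‖ * ‖fhat t‖ := by
      refine integral_congr_ae ?_
      filter_upwards [hψhat_pos] with t ht
      have hs : Real.sqrt (ψhat t) ≠ 0 := by
        positivity
      rw [ha_def, hb_def]
      field_simp
    calc ∫ t, ‖g t‖ * ‖fhat t‖ = ∫ t, a t * b t := heq.symm
      _ ≤ (∫ t, a t ^ (2 : ℝ)) ^ (1 / 2 : ℝ) * (∫ t, b t ^ (2 : ℝ)) ^ (1 / 2 : ℝ) := hCS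
      _ = Real.sqrt (∫ t, a t ^ 2) * Real.sqrt (∫ t, b t ^ 2) := by rw [hrpow a, hrpow b]
      _ = _ := by rw [ha2eq, hb2eq]
  rw [Real.sqrt_mul hc2, Real.sqrt_mul hc2]
  calc |(∑ j, u j * f (xs j)) - f x| ≤ c2pin n * ∫ t, ‖g t‖ * ‖fhat t‖ := habs
    _ ≤ c2pin n * (Real.sqrt (∫ t, ‖g t‖ ^ 2 * ψhat t) *
        Real.sqrt (∫ t, ‖fhat t‖ ^ 2 * (ψhat t)⁻¹)) := by gcongr
    _ = _ := by symm; rw [mul_mul_mul_comm, Real.mul_self_sqrt hc2]
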